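/- For every n ≥ 1 and every partition symbol α of n, the coefficient of the monomial ∏_i x_i^{α(i)} in the Cauchy polynomial j_n equals (−1)^{α(2)+α(4)+α(6)+⋯} times the coefficient of the same monomial in k_n; in particular the coefficients of j_n and of k_n coincide in absolute value. -/

import Mathlib

open MvPolynomial

/-- The unique `ℚ`-linear derivation `δ` of `ℚ[x₁, x₂, …]` with `δ xₖ = k · xₖ₊₁`. -/
noncomputable def δ : Derivation ℚ (MvPolynomial ℕ ℚ) (MvPolynomial ℕ ℚ) :=
  mkDerivation ℚ fun k => (k : MvPolynomial ℕ ℚ) * X (k + 1)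

/-- The Cauchy polynomials: `j 1 = x₁` and `j (k+1) = x₁ · j k − δ (j k)`. -/
noncomputable def cauchyJ : ℕ → MvPolynomial ℕ ℚ
  | 0 => 1
  | k + 1 => X 1 * cauchyJ k - δ (cauchyJ k)

/-- The complementary polynomials: `k 1 = x₁` and `k (i+1) = x₁ · k i + δ (k i)`. -/
noncomputable def cauchyK : ℕ → MvPolynomial ℕ ℚ
  | 0 => 1
  | i + 1 => X 1 * cauchyK i + δ (cauchyK i)

/-- The sign automorphism `xᵢ ↦ (-1)^{i+1} xᵢ`. -/
noncomputable def sigmaSign : MvPolynomial ℕ ℚ →ₐ[ℚ] MvPolynomial ℕ ℚ :=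
  aeval fun i => ((-1 : ℚ) ^ (i + 1)) • X i

lemma prod_smul_aux {ι : Type*} (s : Finset ι) (b : ι → ℚ) (f : ι → MvPolynomial ℕ ℚ) :
    ∏ i ∈ s, b i • f i = (∏ i ∈ s, b i) • ∏ i ∈ s, f i := by
  induction s using Finset.cons_induction with
  | empty => simp
  | cons j s hj ih =>
    rw [Finset.prod_cons, Finset.prod_cons, Finset.prod_cons, ih, smul_mul_smul_comm]

noncomputable def eps (α : ℕ →₀ ℕ) : ℚ :=
  (-1) ^ (α.sum fun i a => if Even i then a else 0)

lemma sigmaSign_monomial (β : ℕ →₀ ℕ) (c : ℚ) :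
    sigmaSign (monomial β c) = eps β • monomial β c := by
  rw [sigmaSign, aeval_monomial, eps]
  have h1 : (β.prod fun n e => (((-1 : ℚ) ^ (n + 1)) • X n) ^ e)
      = (∏ n ∈ β.support, ((-1 : ℚ) ^ (n + 1)) ^ β n) •
        (β.prod fun n e => (X n : MvPolynomial ℕ ℚ) ^ e) := by
    rw [Finsupp.prod, Finsupp.prod]
    simp_rw [smul_pow]
    exact prod_smul_aux β.support (fun n => ((-1 : ℚ) ^ (n + 1)) ^ β n)
      (fun n => (X n : MvPolynomial ℕ ℚ) ^ β n)
  have h2 : (∏ n ∈ β.support, ((-1 : ℚ) ^ (n + 1)) ^ β n)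
      = (-1 : ℚ) ^ (β.sum fun i a => if Even i then a else 0) := by
    rw [Finsupp.sum, ← Finset.prod_pow_eq_pow_sum]
    refine Finset.prod_congr rfl fun n _ => ?_
    rcases Nat.even_or_odd n with h | h
    · rw [if_pos h, (Even.add_one h).neg_one_pow]
    · rw [if_neg (by simpa using h), pow_zero, (Odd.add_one h).neg_one_pow, one_pow]
  rw [h1, h2, mul_smul_comm]
  congr 1
  rw [monomial_eq]
  rfl

lemma coeff_sigmaSign (α : ℕ →₀ ℕ) (p : MvPolynomial ℕ ℚ) :
    coeff α (sigmaSign p) = eps α * coeff α p := by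
  induction p using MvPolynomial.induction_on' with
  | monomial β c =>
    rw [sigmaSign_monomial, coeff_smul, smul_eq_mul]
    by_cases h : β = α
    · subst h; rfl
    · simp [coeff_monomial, h]
  | add p q hp hq =>
    rw [map_add, coeff_add, coeff_add, hp, hq, mul_add]

lemma sigmaSign_delta (p : MvPolynomial ℕ ℚ) :
    sigmaSign (δ p) = - δ (sigmaSign p) := by
  induction p using MvPolynomial.induction_on with
  | C a =>
    have : (C a : MvPolynomial ℕ ℚ) = algebraMap ℚ _ a := rfl
    simp [this, Derivation.map_algebraMap]
  | add p q hp hq =>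
    rw [map_add, map_add, map_add, hp, hq, map_add, neg_add]
  | mul_X p i hp =>
    have hδX : δ (X i) = (i : MvPolynomial ℕ ℚ) * X (i + 1) := by
      rw [δ, mkDerivation_X]
    have hσX : sigmaSign (X i) = ((-1 : ℚ) ^ (i + 1)) • X i := by
      rw [sigmaSign, aeval_X]
    have hσX1 : sigmaSign (X (i + 1)) = ((-1 : ℚ) ^ (i + 2)) • X (i + 1) := by
      rw [sigmaSign, aeval_X]
    have h2 : sigmaSign (δ (X i)) = - δ (sigmaSign (X i)) := by
      rw [hδX, map_mul, hσX, Derivation.map_smul, hδX, hσX1, map_natCast, mul_smul_comm,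
        show ((-1 : ℚ) ^ (i + 2)) = -((-1 : ℚ) ^ (i + 1)) by ring, neg_smul]
    calc sigmaSign (δ (p * X i))
        = sigmaSign (p * δ (X i) + X i * δ p) := by
          rw [Derivation.leibniz, smul_eq_mul, smul_eq_mul]
      _ = sigmaSign p * sigmaSign (δ (X i)) + sigmaSign (X i) * sigmaSign (δ p) := by
          rw [map_add, map_mul, map_mul]
      _ = -(sigmaSign p * δ (sigmaSign (X i)) + sigmaSign (X i) * δ (sigmaSign p)) := by
          rw [hp, h2]; ring
      _ = - δ (sigmaSign p * sigmaSign (X i)) := by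
          rw [Derivation.leibniz, smul_eq_mul, smul_eq_mul]
      _ = - δ (sigmaSign (p * X i)) := by rw [_root_.map_mul sigmaSign p (X i)]

lemma sigmaSign_cauchyJ (n : ℕ) : sigmaSign (cauchyJ n) = cauchyK n := by
  induction n with
  | zero => simp [cauchyJ, cauchyK]
  | succ k ih =>
    rw [cauchyJ, cauchyK, map_sub, map_mul, sigmaSign_delta, ih]
    have : sigmaSign (X 1) = X 1 := by
      rw [sigmaSign, aeval_X]; norm_num
    rw [this]; ring

theorem coeff_cauchyJ_eq_sign_mul_coeff_cauchyK (n : ℕ) (hn : 1 ≤ n) (α : ℕ →₀ ℕ)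
    (h0 : α 0 = 0) (hα : (α.sum fun i a => i * a) = n) :
    coeff α (cauchyJ n) =
        (-1 : ℚ) ^ (α.sum fun i a => if Even i then a else 0) * coeff α (cauchyK n) ∧
      |coeff α (cauchyJ n)| = |coeff α (cauchyK n)| := by
  have key : coeff α (cauchyK n) = eps α * coeff α (cauchyJ n) := by
    rw [← sigmaSign_cauchyJ, coeff_sigmaSign]
  have heps : eps α * eps α = 1 := by
    rw [eps, ← pow_add, ← two_mul, pow_mul]; norm_num
  constructor
  · rw [key, ← mul_assoc]
    rw [show ((-1 : ℚ) ^ (α.sum fun i a => if Even i then a else 0)) = eps α from rfl,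
      heps, one_mul]
  · rw [key, abs_mul]
    have : |eps α| = 1 := by
      rw [eps, abs_pow, abs_neg, abs_one, one_pow]
    rw [this, one_mul]
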